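/- For any solution (x_n) of x_{n+4} = max{x_{n+3}, x_{n+2}, x_{n+1}, 0} - x_n, if x_j < 0 and |x_j| = max{|x_n| : n ≥ 1}, then x_{j+4} = |x_j|; consequently the supremum of |x_n| over n ≥ 1 is attained at a non-negative term of the sequence. -/
import Mathlib


theorem stmt_1 (x : ℕ → ℝ) (j : ℕ) (hj : 1 ≤ j)
    (hrec : ∀ n ≥ 1, x (n + 4) = max (max (max (x (n + 3)) (x (n + 2))) (x (n + 1))) 0 - x n)
    (hneg : x j < 0) (hmax : ∀ n ≥ 1, |x n| ≤ |x j|) :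
    x (j + 4) = |x j| ∧ ∃ k ≥ 1, 0 ≤ x k ∧ ∀ n ≥ 1, |x n| ≤ x k := by
  have h4 := hrec j hj
  set M := max (max (max (x (j + 3)) (x (j + 2))) (x (j + 1))) 0 with hM
  have hM0 : 0 ≤ M := le_max_right _ _
  have habsj : |x j| = -x j := abs_of_neg hneg
  have hpos : 0 < x (j + 4) := by rw [h4]; linarith
  have hb := hmax (j + 4) (by omega)
  rw [abs_of_pos hpos, habsj] at hb
  have hMeq : M = 0 := le_antisymm (by linarith [h4, hb]) hM0
  have hx4 : x (j + 4) = |x j| := by rw [h4, hMeq, habsj]; ring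
  refine ⟨hx4, j + 4, by omega, by rw [hx4]; positivity, fun n hn => by rw [hx4]; exact hmax n hn⟩
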